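/- The multiplicative semigroup of monomials in the generators s, t of R₂ is nil of degree exactly 5: every monomial w satisfies w⁵ = 0, and the monomial tst²s satisfies (tst²s)⁴ ≠ 0. -/

import Mathlib

/-!
The tree-indexed vector space `V` over `ℚ` with basis the free monoid on two letters
(encoded as `List Bool`, with `false` the letter `0` and `true` the letter `1`).
The recursive matrices `s = [[0,0],[1,0]]` and `t = [[0,t],[0,s]]` of the ring `R₂`
act on the decomposition `V = ℚ·φ ⊕ 0V ⊕ 1V` by the block-matrix recursion.
-/

noncomputable section

abbrev V : Type := List Bool →₀ ℚ

/-- Prefixing by a letter: the embedding `V → yV`. -/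
def pre (b : Bool) : V →ₗ[ℚ] V := Finsupp.lmapDomain ℚ ℚ (List.cons b)

/-- Value of `s = [[0,0],[1,0]]` on a basis word. -/
def Sfun : List Bool → V
  | [] => 0
  | false :: u => Finsupp.single (true :: u) 1
  | true :: _ => 0

/-- Value of `t = [[0,t],[0,s]]` on a basis word, by recursion. -/
def Tfun : List Bool → V
  | [] => 0
  | false :: _ => 0
  | true :: u => pre false (Tfun u) + pre true (Sfun u)

/-- The generator `s` of `R₂`. -/
def sR : Module.End ℚ V := Finsupp.linearCombination ℚ Sfun

/-- The generator `t` of `R₂`. -/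
def tR : Module.End ℚ V := Finsupp.linearCombination ℚ Tfun

/-- The level-preserving operator with block form `[[e,0,0],[0,A,B],[0,C,D]]` on
`V = ℚ·φ ⊕ 0V ⊕ 1V`, written `e ⊕ [[A,B],[C,D]]`. -/
def blk (e : ℚ) (A B C D : Module.End ℚ V) : Module.End ℚ V :=
  Finsupp.linearCombination ℚ (fun w => match w with
    | [] => Finsupp.single ([] : List Bool) e
    | false :: u => pre false (A (Finsupp.single u 1)) + pre true (C (Finsupp.single u 1))
    | true :: u => pre false (B (Finsupp.single u 1)) + pre true (D (Finsupp.single u 1)))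

/-- The monomial in `s, t` given by a word (`false ↦ s`, `true ↦ t`). -/
def mono (w : List Bool) : Module.End ℚ V :=
  (w.map (fun b => if b then tR else sR)).prod

/-- The ring `R₂` generated by `s` and `t` (a non-unital subring of `End ℚ V`). -/
def R2 : NonUnitalSubring (Module.End ℚ V) := NonUnitalSubring.closure {sR, tR}

end

namespace NilFive

def step : Bool → List Bool → Option (List Bool)
  | false, (false :: v) => some (true :: v)
  | true, (true :: false :: v) => some (true :: true :: v)
  | true, (true :: true :: v) => (step true (true :: v)).map (List.cons false)
  | _, _ => none

def prun : List Bool → List Bool → Option (List Bool)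
  | [], u => some u
  | a :: p, u => (step a u).bind (prun p)

/-- Head of a list with default. -/
def nxt : List Bool → Bool → Bool
  | [], c => c
  | x :: _, _ => x

def emit : List Bool → Bool → Bool → Option (List Bool)
  | [], b, c => if b = c then some [] else none
  | false :: p, b, c => if b then none else emit p true c
  | true :: p, b, c =>
      if b then (emit p (nxt p c) c).map (List.cons !(nxt p c)) else none

theorem emit_head {p : List Bool} {b c : Bool} {e : List Bool}
    (h : emit p b c = some e) : nxt p c = b := by
  cases p with
  | nil =>
      simp only [emit] at h
      split at h
      · simp only [nxt]; exact (by assumption : b = c).symm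
      · exact absurd h (by simp)
  | cons a p =>
      cases a <;> simp only [emit] at h <;> split at h <;> simp_all [nxt]

/-- The root simulation lemma. -/
theorem root : ∀ (p : List Bool) (b : Bool) (u r : List Bool),
    prun p (b :: u) = some r →
    ∃ c v e, r = c :: v ∧ emit p b c = some e ∧ prun e u = some v := by
  intro p
  induction p with
  | nil =>
      intro b u r h
      simp only [prun] at h
      exact ⟨b, u, [], by simp [← Option.some_inj.mp h], by simp [emit], by simp [prun]⟩
  | cons a p ih =>
      intro b u r h
      simp only [prun] at h
      cases a with
      | false =>
          cases b with
          | true => simp [step] at h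
          | false =>
              simp only [step, Option.bind_some] at h
              obtain ⟨c, v, e, rfl, he, hv⟩ := ih true u r h
              exact ⟨c, v, e, rfl, by simp [emit, he], hv⟩
      | true =>
          cases b with
          | false => simp [step] at h
          | true =>
              cases u with
              | nil => simp [step] at h
              | cons x w =>
                  cases x with
                  | false =>
                      simp only [step, Option.bind_some] at h
                      obtain ⟨c, v, e, rfl, he, hv⟩ := ih true (true :: w) r h
                      have hh : nxt p c = true := emit_head he
                      refine ⟨c, v, false :: e, rfl, ?_, ?_⟩
                      · simp [emit, hh, he]
                      · simp [prun, step, hv]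
                  | true =>
                      simp only [step] at h
                      cases hs : step true (true :: w) with
                      | none => rw [hs] at h; simp at h
                      | some w2 =>
                          rw [hs] at h
                          simp only [Option.map_some, Option.bind_some] at h
                          obtain ⟨c, v, e, rfl, he, hv⟩ := ih false w2 r h
                          have hh : nxt p c = false := emit_head he
                          refine ⟨c, v, true :: e, rfl, ?_, ?_⟩
                          · simp [emit, hh, he]
                          · simp [prun, step, hs, hv]

theorem prun_append (p q : List Bool) (u : List Bool) :
    prun (p ++ q) u = (prun p u).bind (prun q) := by
  induction p generalizing u with
  | nil => simp [prun]
  | cons a p ih =>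
      simp only [List.cons_append, prun]
      cases step a u with
      | none => simp
      | some w => simp [ih]

theorem emit_append : ∀ (Q : List Bool) (h : Bool) (R : List Bool) (b c : Bool),
    emit (Q ++ h :: R) b c =
      (emit Q b h).bind fun z => (emit (h :: R) h c).map (z ++ ·) := by
  intro Q
  induction Q with
  | nil =>
      intro h R b c
      by_cases hb : b = h
      · subst hb; simp [emit]
      · have h1 : emit (h :: R) b c = none := by
          cases h <;> cases b <;> simp_all [emit]
        have h2 : emit ([] : List Bool) b h = none := by simp [emit, hb]
        simp [h1, h2]
  | cons a Q ih =>
      intro h R b c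
      cases a with
      | false =>
          cases b with
          | true => simp [emit]
          | false =>
              have l1 : emit (false :: Q ++ h :: R) false c = emit (Q ++ h :: R) true c := by
                simp [emit]
              have l2 : emit (false :: Q) false h = emit Q true h := by simp [emit]
              rw [l1, l2, ih]
      | true =>
          cases b with
          | false => simp [emit]
          | true =>
              cases Q with
              | nil =>
                  have l1 : emit (true :: ([] : List Bool) ++ h :: R) true c
                      = (emit (h :: R) h c).map (List.cons !h) := by
                    simp [emit, nxt]
                  have l2 : emit [true] true h = some [!h] := by simp [emit, nxt]
                  rw [l1, l2]
                  cases emit (h :: R) h c <;> simp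
              | cons q Q' =>
                  have l1 : emit (true :: (q :: Q') ++ h :: R) true c
                      = (emit ((q :: Q') ++ h :: R) q c).map (List.cons !q) := by
                    simp [emit, nxt]
                  have l2 : emit (true :: q :: Q') true h
                      = (emit (q :: Q') q h).map (List.cons !q) := by
                    simp [emit, nxt]
                  rw [l1, l2, ih]
                  cases emit (q :: Q') q h <;> cases emit (h :: R) h c <;> simp

theorem emit_flip : ∀ (Q : List Bool) (b h h' : Bool) (z z' : List Bool),
    h ≠ h' → emit Q b h = some z → emit Q b h' = some z' →
    ∃ W, z = W ++ [!h] ∧ z' = W ++ [!h'] := by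
  intro Q
  induction Q with
  | nil =>
      intro b h h' z z' hne h1 h2
      simp only [emit] at h1 h2
      split at h1 <;> split at h2 <;> simp_all
  | cons a Q ih =>
      intro b h h' z z' hne h1 h2
      cases a with
      | false =>
          cases b with
          | true => simp [emit] at h1
          | false =>
              simp only [emit, if_neg] at h1 h2
              exact ih true h h' z z' hne (by simpa using h1) (by simpa using h2)
      | true =>
          cases b with
          | false => simp [emit] at h1
          | true =>
              cases Q with
              | nil =>
                  simp only [emit, nxt, if_pos] at h1 h2
                  simp only [emit, if_pos rfl, Option.map_some] at h1 h2
                  refine ⟨[], ?_, ?_⟩ <;> simp_all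
              | cons q Q' =>
                  simp only [emit, nxt, if_pos] at h1 h2
                  rw [Option.map_eq_some_iff] at h1 h2
                  obtain ⟨z0, hz0, rfl⟩ := h1
                  obtain ⟨z0', hz0', rfl⟩ := h2
                  obtain ⟨W, rfl, rfl⟩ := ih q h h' z0 z0' hne hz0 hz0'
                  exact ⟨(!q) :: W, by simp, by simp⟩

theorem emit_true_cons_ne_nil {P : List Bool} {b c : Bool} :
    emit (true :: P) b c ≠ some [] := by
  cases b with
  | false => simp [emit]
  | true => cases h' : emit P (nxt P c) c <;> simp [emit, h']

theorem emit_nil_inv {a : Bool} {Q : List Bool} {b c : Bool}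
    (h : emit (a :: Q) b c = some []) : a = false ∧ Q = [] ∧ b = false ∧ c = true := by
  cases a with
  | true => exact absurd h emit_true_cons_ne_nil
  | false =>
      cases b with
      | true => simp [emit] at h
      | false =>
          have h' : emit Q true c = some [] := by simpa [emit] using h
          cases Q with
          | nil =>
              simp only [emit] at h'
              split at h' <;> simp_all
          | cons q Q' =>
              have hq := emit_head h'
              simp only [nxt] at hq
              subst hq
              exact absurd h' emit_true_cons_ne_nil


/-! ### Suffix computations -/

theorem emit_snoc_t (Q : List Bool) (b c : Bool) :
    emit (Q ++ [true]) b c = (emit Q b true).map (· ++ [!c]) := by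
  rw [emit_append Q true [] b c]
  have : emit [true] true c = some [!c] := by simp [emit, nxt]
  rw [this]
  cases emit Q b true <;> simp

theorem emit_snoc_f (Q : List Bool) (b c : Bool) :
    emit (Q ++ [false]) b c = if c then emit Q b false else none := by
  rw [emit_append Q false [] b c]
  have : emit [false] false c = if c then some [] else none := by
    cases c <;> simp [emit]
  rw [this]
  cases c <;> cases emit Q b false <;> simp

theorem emit_pair_ft (Q : List Bool) (b c : Bool) :
    emit (Q ++ [false, true]) b c = (emit Q b false).map (· ++ [!c]) := by
  rw [emit_append Q false [true] b c]
  have : emit [false, true] false c = some [!c] := by simp [emit, nxt]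
  rw [this]
  cases emit Q b false <;> simp

theorem emit_pair_tf (Q : List Bool) (b c : Bool) :
    emit (Q ++ [true, false]) b c =
      if c then (emit Q b true).map (· ++ [true]) else none := by
  rw [emit_append Q true [false] b c]
  have : emit [true, false] true c = if c then some [true] else none := by
    cases c <;> simp [emit, nxt]
  rw [this]
  cases c <;> cases emit Q b true <;> simp

theorem emit_pair_tt (Q : List Bool) (b c : Bool) :
    emit (Q ++ [true, true]) b c = (emit Q b true).map (· ++ [false, !c]) := by
  rw [emit_append Q true [true] b c]
  have : emit [true, true] true c = some [false, !c] := by simp [emit, nxt]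
  rw [this]
  cases emit Q b true <;> simp

theorem emit_pair_ff (Q : List Bool) (b c : Bool) :
    emit (Q ++ [false, false]) b c = none := by
  rw [emit_append Q false [false] b c]
  have : emit [false, false] false c = none := by simp [emit, nxt]
  rw [this]
  cases emit Q b false <;> simp

/-! ### Kill lemmas -/

theorem ss_kill : ∀ (X Y : List Bool) (u : List Bool),
    prun (X ++ false :: false :: Y) u = none := by
  have base : ∀ (Y : List Bool) (u : List Bool), prun (false :: false :: Y) u = none := by
    intro Y u
    match u with
    | [] => simp [prun, step]
    | true :: v => simp [prun, step]
    | false :: v => simp [prun, step]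
  intro X Y u
  rw [prun_append]
  cases prun X u with
  | none => simp
  | some w => simp [base]

theorem step_t_shape : ∀ (u r : List Bool), step true u = some r →
    (∃ v, r = false :: v) ∨ (∃ v, r = true :: true :: v) := by
  intro u r h
  match u with
  | [] => simp [step] at h
  | false :: v => simp [step] at h
  | [true] => simp [step] at h
  | true :: false :: v =>
      simp only [step, Option.some_inj] at h
      exact Or.inr ⟨v, h.symm⟩
  | true :: true :: v =>
      simp only [step] at h
      cases hs : step true (true :: v) with
      | none => rw [hs] at h; simp at h
      | some w =>
          rw [hs] at h
          simp only [Option.map_some, Option.some_inj] at h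
          exact Or.inl ⟨w, h.symm⟩

theorem t3_kill : ∀ (X Y : List Bool) (u : List Bool),
    prun (X ++ true :: true :: true :: Y) u = none := by
  have base : ∀ (Y : List Bool) (u : List Bool), prun (true :: true :: true :: Y) u = none := by
    intro Y u
    show (step true u).bind _ = none
    cases h1 : step true u with
    | none => simp
    | some r1 =>
        simp only [Option.bind_some]
        show (step true r1).bind _ = none
        rcases step_t_shape u r1 h1 with ⟨v, rfl⟩ | ⟨v, rfl⟩
        · simp [step]
        · show ((step true (true :: v)).map (List.cons false)).bind _ = none
          cases h2 : step true (true :: v) with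
          | none => simp
          | some w => simp [prun, step]
  intro X Y u
  rw [prun_append]
  cases prun X u with
  | none => simp
  | some w => simp [base]

theorem prun_nil_input {p : List Bool} (h : p ≠ []) : prun p [] = none := by
  match p with
  | [] => exact absurd rfl h
  | a :: p' => cases a <;> simp [prun, step]

theorem absurd_none {o : Option (List Bool)} {v : List Bool}
    (h : o = some v) (hn : o = none) : False := by rw [hn] at h; exact nomatch h


theorem kill_mid {q : List Bool} (hq : ∀ w, prun q w = none)
    (X Y u : List Bool) : prun (X ++ (q ++ Y)) u = none := by
  rw [prun_append]
  cases prun X u with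
  | none => simp
  | some w =>
      simp only [Option.bind_some]
      rw [prun_append, hq w]
      simp

theorem ss_none : ∀ w, prun [false, false] w = none := fun w => ss_kill [] [] w

theorem t3_none : ∀ w, prun [true, true, true] w = none := fun w => t3_kill [] [] w

theorem kill_tail {B : List Bool} (hB : ∀ w, prun B w = none)
    (A : List Bool) (u : List Bool) : prun (A ++ B) u = none := by
  rw [prun_append]
  cases prun A u <;> simp [hB]

/-- The invariant class of word-triples. -/
inductive Cls : List Bool → List Bool → List Bool → Prop
  | c0 : Cls [] [] []
  | c1 : Cls [false] [false] [true]
  | c2 : Cls [true] [false] [false]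
  | c3 : Cls [true] [false] [true]
  | c4 : Cls [true] [true] [false]
  | c5 : Cls [true] [true] [false, false]
  | c6 : Cls [true] [true] [false, true]
  | c7 : Cls [false, true] [false, true] [true]
  | c8 : Cls [false, true] [false, true] [true, false]
  | c9 : Cls [false, true] [false, true] [true, true]
  | cA : Cls [true, false] [true, false] [false, false]
  | cB : Cls [true, false] [true, false] [false, true]
  | cC : Cls [true, true] [true, true] [false, false]
  | cD : Cls [true, true] [true, true] [false, true]

theorem main : ∀ (n : ℕ) (u : List Bool), u.length ≤ n →
    ∀ (Q α β γ : List Bool), Cls α β γ → Q ++ α ≠ [] →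
    prun ((Q ++ α) ++ ((Q ++ α) ++ ((Q ++ α) ++ ((Q ++ β) ++ (Q ++ γ))))) u = none := by
  intro n
  induction n with
  | zero =>
      intro u hu Q α β γ hc hne
      have : u = [] := List.length_eq_zero_iff.mp (Nat.le_zero.mp hu)
      subst this
      exact prun_nil_input (fun hcon => hne (List.append_eq_nil_iff.mp hcon).1)
  | succ n ih =>
      intro u hu Q α β γ hc hne
      cases u with
      | nil => exact prun_nil_input (fun hcon => hne (List.append_eq_nil_iff.mp hcon).1)
      | cons b u' =>
      by_contra hX
      obtain ⟨r, hr⟩ := Option.ne_none_iff_exists'.mp hX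
      have hr0 := hr
      rw [prun_append, Option.bind_eq_some_iff] at hr
      obtain ⟨r1, h1, hr⟩ := hr
      rw [prun_append, Option.bind_eq_some_iff] at hr
      obtain ⟨r2, h2, hr⟩ := hr
      rw [prun_append, Option.bind_eq_some_iff] at hr
      obtain ⟨r3, h3, hr⟩ := hr
      rw [prun_append, Option.bind_eq_some_iff] at hr
      obtain ⟨r4, h4, h5⟩ := hr
      obtain ⟨c1, v1, e1, rfl, m1, d1⟩ := root _ _ _ _ h1
      obtain ⟨c2, v2, e2, rfl, m2, d2⟩ := root _ _ _ _ h2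
      obtain ⟨c3, v3, e3, rfl, m3, d3⟩ := root _ _ _ _ h3
      obtain ⟨c4, v4, e4, rfl, m4, d4⟩ := root _ _ _ _ h4
      obtain ⟨c5, v5, e5, rfl, m5, d5⟩ := root _ _ _ _ h5
      have hdeep : prun (e1 ++ (e2 ++ (e3 ++ (e4 ++ e5)))) u' = some v5 := by
        simp [prun_append, d1, d2, d3, d4, d5]
      have hu' : u'.length ≤ n := by
        simpa using Nat.succ_le_succ_iff.mp (by simpa using hu)
      have H1 := emit_head m1
      have H2 := emit_head m2
      have H3 := emit_head m3
      have H4 := emit_head m4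
      have H5 := emit_head m5
      clear h1 h2 h3 h4 h5 hX hu
      cases hc with
      | c0 =>
          simp only [List.append_nil] at m1 m2 m3 m4 m5 H1 H2 H3 H4 H5 hne hdeep hr0
          cases Q with
          | nil => exact hne rfl
          | cons q Q' =>
              simp only [nxt] at H1 H2 H3 H4 H5
              subst H1; subst H2; subst H3; subst H4; subst H5
              have he2 : e2 = e1 := Option.some_inj.mp (m2.symm.trans m1)
              have he3 : e3 = e1 := Option.some_inj.mp (m3.symm.trans m1)
              have he4 : e4 = e1 := Option.some_inj.mp (m4.symm.trans m1)
              rw [he2, he3, he4] at hdeep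
              by_cases hc5 : c5 = q
              · subst hc5
                have he5 : e5 = e1 := Option.some_inj.mp (m5.symm.trans m1)
                rw [he5] at hdeep
                cases e1 with
                | nil =>
                    obtain ⟨hf, _, _, ht⟩ := emit_nil_inv m1
                    subst hf; exact Bool.noConfusion ht
                | cons x e1' =>
                    have hrec := ih u' hu' (x :: e1') [] [] [] Cls.c0 (by simp)
                    simp only [List.append_nil] at hrec
                    exact absurd_none hdeep hrec
              · obtain ⟨W, hW1, hW5⟩ := emit_flip (q :: Q') q q c5 e1 e5
                  (fun hh => hc5 hh.symm) m1 m5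
                cases q <;> cases c5 <;> try exact absurd rfl hc5
                · -- q = false, c5 = true
                  simp only [Bool.not_false, Bool.not_true] at hW1 hW5
                  rw [hW1, hW5] at hdeep
                  exact absurd_none hdeep (ih u' hu' W [true] [true] [false] Cls.c4 (by simp))
                · -- q = true, c5 = false
                  simp only [Bool.not_false, Bool.not_true] at hW1 hW5
                  rw [hW1, hW5] at hdeep
                  exact absurd_none hdeep (ih u' hu' W [false] [false] [true] Cls.c1 (by simp))
      | c1 =>
          cases Q with
          | nil =>
              simp only [List.nil_append, nxt] at m1 H2
              subst H2
              cases b <;> simp [emit] at m1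
          | cons q Q' =>
              simp only [List.cons_append, nxt] at H1 H2 H3 H4 H5
              subst H1; subst H2; subst H3; subst H4; subst H5
              cases q with
              | false => rw [emit_snoc_f] at m1; simp at m1
              | true =>
                  rw [emit_snoc_f, if_pos rfl] at m1 m2 m3 m4
                  have he2 : e2 = e1 := Option.some_inj.mp (m2.symm.trans m1)
                  have he3 : e3 = e1 := Option.some_inj.mp (m3.symm.trans m1)
                  have he4 : e4 = e1 := Option.some_inj.mp (m4.symm.trans m1)
                  rw [emit_snoc_t, Option.map_eq_some_iff] at m5
                  obtain ⟨z5, hz5, he5⟩ := m5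
                  obtain ⟨W, hW1, hW5⟩ := emit_flip (true :: Q') true false true e1 z5
                    (by simp) m1 hz5
                  simp only [Bool.not_false, Bool.not_true] at hW1 hW5
                  have he5' : e5 = W ++ [false, !c5] := by rw [← he5, hW5]; simp
                  rw [he2, he3, he4, hW1, he5'] at hdeep
                  cases c5 with
                  | true =>
                      simp only [Bool.not_true] at hdeep
                      exact absurd_none hdeep
                        (ih u' hu' W [true] [true] [false, false] Cls.c5 (by simp))
                  | false =>
                      simp only [Bool.not_false] at hdeep
                      exact absurd_none hdeep
                        (ih u' hu' W [true] [true] [false, true] Cls.c6 (by simp))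
      | c2 =>
          cases Q with
          | nil =>
              have hk : prun (([] ++ [true]) ++ (([] ++ [true]) ++ (([] ++ [true]) ++
                  (([] ++ [false]) ++ ([] ++ [false]))))) (b :: u') = none := by
                simpa using kill_mid t3_none [] [false, false] (b :: u')
              exact absurd_none hr0 hk
          | cons q Q' =>
              simp only [List.cons_append, nxt] at H1 H2 H3 H4 H5
              subst H1; subst H2; subst H3; subst H4; subst H5
              rw [emit_snoc_t, Option.map_eq_some_iff] at m1
              obtain ⟨z1, hz1, he1⟩ := m1
              rw [emit_snoc_f] at m4
              cases q with
              | false => simp at m4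
              | true =>
                  rw [if_pos rfl] at m4
                  obtain ⟨W, hWz, hW4⟩ := emit_flip (true :: Q')
                    true true false z1 e4 (by simp) hz1 m4
                  simp only [Bool.not_true, Bool.not_false] at hWz hW4 he1
                  have he1' : e1 = W ++ [false, false] := by rw [← he1, hWz]; simp
                  have hkill := kill_mid ss_none W (e2 ++ (e3 ++ (e4 ++ e5))) u'
                  rw [show e1 ++ (e2 ++ (e3 ++ (e4 ++ e5)))
                      = W ++ ([false, false] ++ (e2 ++ (e3 ++ (e4 ++ e5)))) from by
                    rw [he1']; simp] at hdeep
                  exact absurd_none hdeep hkill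
      | c3 =>
          cases Q with
          | nil =>
              have hk : prun (([] ++ [true]) ++ (([] ++ [true]) ++ (([] ++ [true]) ++
                  (([] ++ [false]) ++ ([] ++ [true]))))) (b :: u') = none := by
                simpa using kill_mid t3_none [] [false, true] (b :: u')
              exact absurd_none hr0 hk
          | cons q Q' =>
              simp only [List.cons_append, nxt] at H1 H2 H3 H4 H5
              subst H1; subst H2; subst H3; subst H4; subst H5
              rw [emit_snoc_t, Option.map_eq_some_iff] at m1
              obtain ⟨z1, hz1, he1⟩ := m1
              rw [emit_snoc_f] at m4
              cases q with
              | false => simp at m4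
              | true =>
                  rw [if_pos rfl] at m4
                  obtain ⟨W, hWz, hW4⟩ := emit_flip (true :: Q')
                    true true false z1 e4 (by simp) hz1 m4
                  simp only [Bool.not_true, Bool.not_false] at hWz hW4 he1
                  have he1' : e1 = W ++ [false, false] := by rw [← he1, hWz]; simp
                  have hkill := kill_mid ss_none W (e2 ++ (e3 ++ (e4 ++ e5))) u'
                  rw [show e1 ++ (e2 ++ (e3 ++ (e4 ++ e5)))
                      = W ++ ([false, false] ++ (e2 ++ (e3 ++ (e4 ++ e5)))) from by
                    rw [he1']; simp] at hdeep
                  exact absurd_none hdeep hkill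
      | c4 =>
          cases Q with
          | nil =>
              have hk : prun (([] ++ [true]) ++ (([] ++ [true]) ++ (([] ++ [true]) ++
                  (([] ++ [true]) ++ ([] ++ [false]))))) (b :: u') = none := by
                simpa using kill_mid t3_none [] [true, false] (b :: u')
              exact absurd_none hr0 hk
          | cons q Q' =>
              simp only [List.cons_append, nxt] at H1 H2 H3 H4 H5
              subst H1; subst H2; subst H3; subst H4; subst H5
              rw [emit_snoc_t] at m1 m2 m3 m4
              have he2 : e2 = e1 := Option.some_inj.mp (m2.symm.trans m1)
              have he3 : e3 = e1 := Option.some_inj.mp (m3.symm.trans m1)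
              have he4 : e4 = e1 := Option.some_inj.mp (m4.symm.trans m1)
              rw [Option.map_eq_some_iff] at m1
              obtain ⟨z1, hz1, he1⟩ := m1
              rw [emit_snoc_f] at m5
              cases c5 with
              | false => simp at m5
              | true =>
                  rw [if_pos rfl] at m5
                  obtain ⟨W, hWz, hW5⟩ := emit_flip (q :: Q')
                    q true false z1 e5 (by simp) hz1 m5
                  simp only [Bool.not_true, Bool.not_false] at hWz hW5
                  cases q with
                  | true =>
                      simp only [Bool.not_true] at he1
                      have he1' : e1 = W ++ [false, false] := by rw [← he1, hWz]; simp
                      have hkill := kill_mid ss_none W (e2 ++ (e3 ++ (e4 ++ e5))) u'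
                      rw [show e1 ++ (e2 ++ (e3 ++ (e4 ++ e5)))
                          = W ++ ([false, false] ++ (e2 ++ (e3 ++ (e4 ++ e5)))) from by
                        rw [he1']; simp] at hdeep
                      exact absurd_none hdeep hkill
                  | false =>
                      simp only [Bool.not_false] at he1
                      have he1' : e1 = W ++ [false, true] := by rw [← he1, hWz]; simp
                      rw [he2, he3, he4, he1', hW5] at hdeep
                      exact absurd_none hdeep
                        (ih u' hu' W [false, true] [false, true] [true] Cls.c7 (by simp))
      | c5 =>
          rw [emit_pair_ff] at m5
          exact nomatch m5
      | c6 =>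
          cases Q with
          | nil =>
              have hk : prun (([] ++ [true]) ++ (([] ++ [true]) ++ (([] ++ [true]) ++
                  (([] ++ [true]) ++ ([] ++ [false, true]))))) (b :: u') = none := by
                simpa using kill_mid t3_none [] [true, false, true] (b :: u')
              exact absurd_none hr0 hk
          | cons q Q' =>
              simp only [List.cons_append, nxt] at H1 H2 H3 H4 H5
              subst H1; subst H2; subst H3; subst H4; subst H5
              rw [emit_snoc_t] at m1 m2 m3 m4
              have he2 : e2 = e1 := Option.some_inj.mp (m2.symm.trans m1)
              have he3 : e3 = e1 := Option.some_inj.mp (m3.symm.trans m1)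
              have he4 : e4 = e1 := Option.some_inj.mp (m4.symm.trans m1)
              rw [Option.map_eq_some_iff] at m1
              obtain ⟨z1, hz1, he1⟩ := m1
              rw [emit_pair_ft, Option.map_eq_some_iff] at m5
              obtain ⟨z5, hz5, he5⟩ := m5
              obtain ⟨W, hWz, hW5⟩ := emit_flip (q :: Q')
                q true false z1 z5 (by simp) hz1 hz5
              simp only [Bool.not_true, Bool.not_false] at hWz hW5
              have he5' : e5 = W ++ [true, !c5] := by rw [← he5, hW5]; simp
              cases q with
              | true =>
                  simp only [Bool.not_true] at he1
                  have he1' : e1 = W ++ [false, false] := by rw [← he1, hWz]; simp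
                  have hkill := kill_mid ss_none W (e2 ++ (e3 ++ (e4 ++ e5))) u'
                  rw [show e1 ++ (e2 ++ (e3 ++ (e4 ++ e5)))
                      = W ++ ([false, false] ++ (e2 ++ (e3 ++ (e4 ++ e5)))) from by
                    rw [he1']; simp] at hdeep
                  exact absurd_none hdeep hkill
              | false =>
                  simp only [Bool.not_false] at he1
                  have he1' : e1 = W ++ [false, true] := by rw [← he1, hWz]; simp
                  rw [he2, he3, he4, he1', he5'] at hdeep
                  cases c5 with
                  | true =>
                      simp only [Bool.not_true] at hdeep
                      exact absurd_none hdeep (ih u' hu' W [false, true] [false, true]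
                        [true, false] Cls.c8 (by simp))
                  | false =>
                      simp only [Bool.not_false] at hdeep
                      exact absurd_none hdeep (ih u' hu' W [false, true] [false, true]
                        [true, true] Cls.c9 (by simp))
      | c7 =>
          cases Q with
          | nil =>
              simp only [List.nil_append, nxt] at m1 m2 m3 m4 m5 H1 H2 H3 H4 H5
              subst H1; subst H2; subst H3; subst H4; subst H5
              have he1 : e1 = [true] := by simpa [emit, nxt] using m1.symm
              have he2 : e2 = [true] := by simpa [emit, nxt] using m2.symm
              have he3 : e3 = [true] := by simpa [emit, nxt] using m3.symm
              have he4 : e4 = [false] := by simpa [emit, nxt] using m4.symm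
              have he5 : e5 = [!c5] := by simpa [emit, nxt] using m5.symm
              rw [he1, he2, he3, he4, he5] at hdeep
              cases c5 with
              | true =>
                  simp only [Bool.not_true] at hdeep
                  have hrec := ih u' hu' [] [true] [false] [false] Cls.c2 (by simp)
                  simp only [List.nil_append] at hrec
                  exact absurd_none hdeep hrec
              | false =>
                  simp only [Bool.not_false] at hdeep
                  have hrec := ih u' hu' [] [true] [false] [true] Cls.c3 (by simp)
                  simp only [List.nil_append] at hrec
                  exact absurd_none hdeep hrec
          | cons q Q' =>
              simp only [List.cons_append, nxt] at H1 H2 H3 H4 H5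
              subst H1; subst H2; subst H3; subst H4; subst H5
              rw [emit_pair_ft] at m1 m2 m3 m4
              have he2 : e2 = e1 := Option.some_inj.mp (m2.symm.trans m1)
              have he3 : e3 = e1 := Option.some_inj.mp (m3.symm.trans m1)
              have he4 : e4 = e1 := Option.some_inj.mp (m4.symm.trans m1)
              rw [Option.map_eq_some_iff] at m1
              obtain ⟨z1, hz1, he1⟩ := m1
              rw [emit_snoc_t, Option.map_eq_some_iff] at m5
              obtain ⟨z5, hz5, he5⟩ := m5
              obtain ⟨W, hWz, hW5⟩ := emit_flip (q :: Q')
                q false true z1 z5 (by simp) hz1 hz5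
              simp only [Bool.not_true, Bool.not_false] at hWz hW5
              have he5' : e5 = W ++ [false, !c5] := by rw [← he5, hW5]; simp
              have he1' : e1 = W ++ [true, !q] := by rw [← he1, hWz]; simp
              rw [he2, he3, he4, he1', he5'] at hdeep
              cases q with
              | false =>
                  simp only [Bool.not_false] at hdeep
                  cases c5 with
                  | true =>
                      simp only [Bool.not_true] at hdeep
                      exact absurd_none hdeep (ih u' hu' W [true, true] [true, true]
                        [false, false] Cls.cC (by simp))
                  | false =>
                      simp only [Bool.not_false] at hdeep
                      exact absurd_none hdeep (ih u' hu' W [true, true] [true, true]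
                        [false, true] Cls.cD (by simp))
              | true =>
                  simp only [Bool.not_true] at hdeep
                  cases c5 with
                  | true =>
                      simp only [Bool.not_true] at hdeep
                      exact absurd_none hdeep (ih u' hu' W [true, false] [true, false]
                        [false, false] Cls.cA (by simp))
                  | false =>
                      simp only [Bool.not_false] at hdeep
                      exact absurd_none hdeep (ih u' hu' W [true, false] [true, false]
                        [false, true] Cls.cB (by simp))
      | c8 =>
          cases Q with
          | nil =>
              simp only [List.nil_append, nxt] at m1 m2 m3 m4 m5 H1 H2 H3 H4 H5
              subst H1; subst H2; subst H3; subst H4; subst H5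
              have he1 : e1 = [true] := by simpa [emit, nxt] using m1.symm
              have he2 : e2 = [true] := by simpa [emit, nxt] using m2.symm
              have he3 : e3 = [true] := by simpa [emit, nxt] using m3.symm
              have he4 : e4 = [false] := by simpa [emit, nxt] using m4.symm
              cases c5 with
              | false => simp [emit, nxt] at m5
              | true =>
                  have he5 : e5 = [true] := by simpa [emit, nxt] using m5.symm
                  rw [he1, he2, he3, he4, he5] at hdeep
                  have hrec := ih u' hu' [] [true] [false] [true] Cls.c3 (by simp)
                  simp only [List.nil_append] at hrec
                  exact absurd_none hdeep hrec
          | cons q Q' =>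
              simp only [List.cons_append, nxt] at H1 H2 H3 H4 H5
              subst H1; subst H2; subst H3; subst H4; subst H5
              rw [emit_pair_ft] at m1 m2 m3 m4
              have he2 : e2 = e1 := Option.some_inj.mp (m2.symm.trans m1)
              have he3 : e3 = e1 := Option.some_inj.mp (m3.symm.trans m1)
              have he4 : e4 = e1 := Option.some_inj.mp (m4.symm.trans m1)
              rw [Option.map_eq_some_iff] at m1
              obtain ⟨z1, hz1, he1⟩ := m1
              rw [emit_pair_tf] at m5
              cases c5 with
              | false => simp at m5
              | true =>
                  rw [if_pos rfl, Option.map_eq_some_iff] at m5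
                  obtain ⟨z5, hz5, he5⟩ := m5
                  obtain ⟨W, hWz, hW5⟩ := emit_flip (q :: Q')
                    q false true z1 z5 (by simp) hz1 hz5
                  simp only [Bool.not_true, Bool.not_false] at hWz hW5
                  have he5' : e5 = W ++ [false, true] := by rw [← he5, hW5]; simp
                  have he1' : e1 = W ++ [true, !q] := by rw [← he1, hWz]; simp
                  rw [he2, he3, he4, he1', he5'] at hdeep
                  cases q with
                  | false =>
                      simp only [Bool.not_false] at hdeep
                      exact absurd_none hdeep (ih u' hu' W [true, true] [true, true]
                        [false, true] Cls.cD (by simp))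
                  | true =>
                      simp only [Bool.not_true] at hdeep
                      exact absurd_none hdeep (ih u' hu' W [true, false] [true, false]
                        [false, true] Cls.cB (by simp))
      | c9 =>
          cases Q with
          | nil =>
              have hk : prun (([] ++ [false, true]) ++ (([] ++ [false, true]) ++
                  (([] ++ [false, true]) ++ (([] ++ [false, true]) ++
                  ([] ++ [true, true]))))) (b :: u') = none := by
                simpa using kill_mid t3_none
                  [false, true, false, true, false, true, false] [] (b :: u')
              exact absurd_none hr0 hk
          | cons q Q' =>
              simp only [List.cons_append, nxt] at H1 H2 H3 H4 H5
              subst H1; subst H2; subst H3; subst H4; subst H5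
              rw [emit_pair_ft] at m1 m2 m3 m4
              rw [Option.map_eq_some_iff] at m1
              obtain ⟨z1, hz1, he1⟩ := m1
              rw [emit_pair_tt, Option.map_eq_some_iff] at m5
              obtain ⟨z5, hz5, he5⟩ := m5
              obtain ⟨W, hWz, hW5⟩ := emit_flip (q :: Q')
                q false true z1 z5 (by simp) hz1 hz5
              simp only [Bool.not_true, Bool.not_false] at hWz hW5
              have he5' : e5 = W ++ ([false, false] ++ [!c5]) := by
                rw [← he5, hW5]; simp
              have hB : ∀ w, prun (W ++ ([false, false] ++ [!c5])) w = none :=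
                fun w => kill_mid ss_none W [!c5] w
              have h4k : ∀ w, prun (e4 ++ (W ++ ([false, false] ++ [!c5]))) w = none :=
                fun w => kill_tail hB e4 w
              have h3k : ∀ w, prun (e3 ++ (e4 ++ (W ++ ([false, false] ++ [!c5])))) w
                  = none := fun w => kill_tail h4k e3 w
              have h2k : ∀ w, prun (e2 ++ (e3 ++ (e4 ++ (W ++ ([false, false] ++ [!c5])))))
                  w = none := fun w => kill_tail h3k e2 w
              have h1k : ∀ w, prun (e1 ++ (e2 ++ (e3 ++ (e4 ++ (W ++
                  ([false, false] ++ [!c5])))))) w = none := fun w => kill_tail h2k e1 w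
              rw [he5'] at hdeep
              exact absurd_none hdeep (h1k u')
      | cA =>
          rw [emit_pair_ff] at m5
          exact nomatch m5
      | cB =>
          cases Q with
          | nil =>
              simp only [List.nil_append, nxt] at m4 H2 H3 H4 H5
              subst H2; subst H3; subst H4; subst H5
              simp [emit, nxt] at m4
          | cons q Q' =>
              simp only [List.cons_append, nxt] at H1 H2 H3 H4 H5
              subst H1; subst H2; subst H3; subst H4; subst H5
              rw [emit_pair_tf] at m1 m2 m3 m4
              cases q with
              | false => simp at m1
              | true =>
                  rw [if_pos rfl] at m1 m2 m3 m4
                  have he2 : e2 = e1 := Option.some_inj.mp (m2.symm.trans m1)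
                  have he3 : e3 = e1 := Option.some_inj.mp (m3.symm.trans m1)
                  have he4 : e4 = e1 := Option.some_inj.mp (m4.symm.trans m1)
                  rw [Option.map_eq_some_iff] at m1
                  obtain ⟨z1, hz1, he1⟩ := m1
                  rw [emit_pair_ft, Option.map_eq_some_iff] at m5
                  obtain ⟨z5, hz5, he5⟩ := m5
                  obtain ⟨W, hWz, hW5⟩ := emit_flip (true :: Q')
                    true true false z1 z5 (by simp) hz1 hz5
                  simp only [Bool.not_true, Bool.not_false] at hWz hW5
                  have he1' : e1 = W ++ [false, true] := by rw [← he1, hWz]; simp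
                  have he5' : e5 = W ++ [true, !c5] := by rw [← he5, hW5]; simp
                  rw [he2, he3, he4, he1', he5'] at hdeep
                  cases c5 with
                  | true =>
                      simp only [Bool.not_true] at hdeep
                      exact absurd_none hdeep (ih u' hu' W [false, true] [false, true]
                        [true, false] Cls.c8 (by simp))
                  | false =>
                      simp only [Bool.not_false] at hdeep
                      exact absurd_none hdeep (ih u' hu' W [false, true] [false, true]
                        [true, true] Cls.c9 (by simp))
      | cC =>
          rw [emit_pair_ff] at m5
          exact nomatch m5
      | cD =>
          cases Q with
          | nil =>
              have hk : prun (([] ++ [true, true]) ++ (([] ++ [true, true]) ++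
                  (([] ++ [true, true]) ++ (([] ++ [true, true]) ++
                  ([] ++ [false, true]))))) (b :: u') = none := by
                simpa using kill_mid t3_none []
                  [true, true, true, true, true, false, true] (b :: u')
              exact absurd_none hr0 hk
          | cons q Q' =>
              simp only [List.cons_append, nxt] at H1 H2 H3 H4 H5
              subst H1; subst H2; subst H3; subst H4; subst H5
              rw [emit_pair_tt] at m1 m2 m3 m4
              rw [Option.map_eq_some_iff] at m1
              obtain ⟨z1, hz1, he1⟩ := m1
              rw [emit_pair_ft, Option.map_eq_some_iff] at m5
              obtain ⟨z5, hz5, he5⟩ := m5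
              obtain ⟨W, hWz, hW5⟩ := emit_flip (q :: Q')
                q true false z1 z5 (by simp) hz1 hz5
              simp only [Bool.not_true, Bool.not_false] at hWz hW5
              have he1' : e1 = W ++ ([false, false] ++ [!q]) := by
                rw [← he1, hWz]; simp
              have hkill := kill_mid ss_none W ([!q] ++ (e2 ++ (e3 ++ (e4 ++ e5)))) u'
              rw [show e1 ++ (e2 ++ (e3 ++ (e4 ++ e5)))
                  = W ++ ([false, false] ++ ([!q] ++ (e2 ++ (e3 ++ (e4 ++ e5))))) from by
                rw [he1']; simp] at hdeep
              exact absurd_none hdeep hkill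

end NilFive

noncomputable section
open NilFive

theorem pre_single (b : Bool) (u : List Bool) :
    pre b (Finsupp.single u (1:ℚ)) = Finsupp.single (b :: u) 1 := by
  simp [pre, Finsupp.lmapDomain_apply, Finsupp.mapDomain_single]

theorem Sfun_eq (u : List Bool) :
    Sfun u = (step false u).elim 0 (fun v => Finsupp.single v (1:ℚ)) := by
  match u with
  | [] => simp [Sfun, step]
  | false :: v => simp [Sfun, step]
  | true :: v => simp [Sfun, step]

theorem Tfun_eq (u : List Bool) :
    Tfun u = (step true u).elim 0 (fun v => Finsupp.single v (1:ℚ)) := by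
  induction u with
  | nil => simp [Tfun, step]
  | cons a v ihv =>
      cases a with
      | false => simp [Tfun, step]
      | true =>
          cases v with
          | nil => simp [Tfun, Sfun, step]
          | cons x v' =>
              cases x with
              | false =>
                  rw [show Tfun (true :: false :: v')
                      = pre false (Tfun (false :: v')) + pre true (Sfun (false :: v'))
                      from rfl,
                    show Tfun (false :: v') = 0 from rfl,
                    show Sfun (false :: v') = Finsupp.single (true :: v') 1 from rfl]
                  simp [pre_single,
                    show step true (true :: false :: v') = some (true :: true :: v') from rfl]
              | true =>
                  rw [show Tfun (true :: true :: v')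
                      = pre false (Tfun (true :: v')) + pre true (Sfun (true :: v'))
                      from rfl,
                    ihv, show Sfun (true :: v') = 0 from rfl,
                    show step true (true :: true :: v')
                      = (step true (true :: v')).map (List.cons false) from rfl]
                  cases hs : step true (true :: v') with
                  | none => simp [hs]
                  | some y => simp [hs, pre_single]

theorem sR_single (u : List Bool) : sR (Finsupp.single u (1:ℚ)) = Sfun u := by
  simp [sR, Finsupp.linearCombination_single]

theorem tR_single (u : List Bool) : tR (Finsupp.single u (1:ℚ)) = Tfun u := by
  simp [tR, Finsupp.linearCombination_single]

theorem mono_single (w : List Bool) (u : List Bool) :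
    mono w (Finsupp.single u (1:ℚ)) =
      (prun w.reverse u).elim 0 (fun v => Finsupp.single v (1:ℚ)) := by
  induction w generalizing u with
  | nil => simp [mono, prun]
  | cons a w ih =>
      have hm : mono (a :: w) = (if a then tR else sR) * mono w := by
        simp [mono]
      rw [hm]
      have hrev : (a :: w).reverse = w.reverse ++ [a] := by simp
      rw [hrev, prun_append]
      rw [Module.End.mul_apply, ih]
      cases hp : prun w.reverse u with
      | none => simp [Option.elim]
      | some y =>
          have hpa : prun [a] y = step a y := by
            show (step a y).bind (prun []) = step a y
            cases step a y <;> rfl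
          simp only [Option.elim, Option.bind_some, hpa]
          cases a with
          | false =>
              rw [if_neg (by simp)]
              rw [sR_single, Sfun_eq]
              cases step false y <;> rfl
          | true =>
              rw [if_pos rfl]
              rw [tR_single, Tfun_eq]
              cases step true y <;> rfl

theorem mono_append (x y : List Bool) : mono (x ++ y) = mono x * mono y := by
  simp [mono, List.map_append, List.prod_append]


/-- The multiplicative semigroup of monomials in `s, t` is nil of degree exactly `5`:
every monomial `w` satisfies `w⁵ = 0`, while `(tst²s)⁴ ≠ 0`. -/
theorem nil_degree_five :
    (∀ w : List Bool, w ≠ [] → (mono w) ^ 5 = 0) ∧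
    (mono [true, false, true, true, false]) ^ 4 ≠ 0 := by
  constructor
  · intro w hw
    have hpow : mono w ^ 5 = mono ((((w ++ w) ++ w) ++ w) ++ w) := by
      rw [mono_append, mono_append, mono_append, mono_append,
        pow_succ, pow_succ, pow_succ, pow_succ, pow_one]
    rw [hpow]
    apply Finsupp.lhom_ext
    intro u q
    have h1 : (Finsupp.single u q : V) = q • Finsupp.single u 1 := by
      rw [Finsupp.smul_single, smul_eq_mul, mul_one]
    rw [h1, map_smul, map_smul, mono_single]
    have hQ : w.reverse ++ ([] : List Bool) ≠ [] := by
      simp [List.reverse_eq_nil_iff, hw]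
    have hmain := NilFive.main u.length u le_rfl w.reverse [] [] [] NilFive.Cls.c0 hQ
    simp only [List.append_nil] at hmain
    have hrev : ((((w ++ w) ++ w) ++ w) ++ w).reverse
        = w.reverse ++ (w.reverse ++ (w.reverse ++ (w.reverse ++ w.reverse))) := by
      simp
    rw [hrev, hmain]
    simp
  · intro h0
    have hpow : mono [true, false, true, true, false] ^ 4
        = mono ((([true, false, true, true, false] ++ [true, false, true, true, false])
            ++ [true, false, true, true, false]) ++ [true, false, true, true, false]) := by
      rw [mono_append, mono_append, mono_append,
        pow_succ, pow_succ, pow_succ, pow_one]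
    have happ := congrArg
      (fun f : Module.End ℚ V =>
        f (Finsupp.single [false, false, false, true, false, false, false] (1:ℚ)))
      (hpow.symm.trans h0)
    simp only [LinearMap.zero_apply] at happ
    rw [mono_single] at happ
    have hrun : NilFive.prun ((([true, false, true, true, false]
          ++ [true, false, true, true, false]) ++ [true, false, true, true, false])
          ++ [true, false, true, true, false]).reverse
        [false, false, false, true, false, false, false]
        = some [true, true, false, false, false, true, true] := by decide
    rw [hrun] at happ
    exact one_ne_zero (Finsupp.single_eq_zero.mp happ)

end
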